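/- In the predictor setting, let 0 ≤ α ≤ 1 and set τ₊ := τ + α·Δτ, κ₊ := κ + α·Δκ, and θ := ν·(1 − 2γ + γ²/β) + 1 − β/2 + γ²/(2β) − γ. Then τ₊·κ₊ ≥ μᵉ·(β·(1 − α) + α·γ − (1/2)·α²·θ). Moreover, if β < 1 or γ < 1, and 0 ≤ α < (γ − β + √((β − γ)² + 2·β·θ))/θ, then τ₊ > 0 and κ₊ > 0. -/

import Mathlib

open Matrix

/-- The norm induced by a (positive definite) matrix `P`: `‖v‖_P = √(vᵀ P v)`. -/
noncomputable def vnorm {n : ℕ} (P : Matrix (Fin n) (Fin n) ℝ) (v : Fin n → ℝ) : ℝ :=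
  Real.sqrt (v ⬝ᵥ (P *ᵥ v))

/-- The operator norm `‖Q‖_P = sup {‖Q u‖_{P⁻¹} : ‖u‖_P ≤ 1}`. -/
noncomputable def opNorm {n : ℕ} (P Q : Matrix (Fin n) (Fin n) ℝ) : ℝ :=
  sSup ((fun u => vnorm P⁻¹ (Q *ᵥ u)) '' {u : Fin n → ℝ | vnorm P u ≤ 1})

/-- The Loewner order: `Loewner P Q` means `P ⪯ Q`, i.e. `Q - P` is positive semidefinite. -/
def Loewner {n : ℕ} (P Q : Matrix (Fin n) (Fin n) ℝ) : Prop :=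
  (Q - P).PosSemidef

private lemma stmt12_aux_sqrt (β γ θ : ℝ) (hβ0 : 0 < β) (hθ : 0 < θ) :
    γ - β < Real.sqrt ((β - γ) ^ 2 + 2 * β * θ) := by
  have h2 := Real.sq_sqrt (show (0:ℝ) ≤ (β - γ) ^ 2 + 2 * β * θ by positivity)
  have h0 := Real.sqrt_nonneg ((β - γ) ^ 2 + 2 * β * θ)
  nlinarith [mul_pos hβ0 hθ]

private lemma stmt12_aux_q (β γ θ a sD : ℝ) (hθ : 0 < θ) (ha : 0 ≤ a)
    (hs2 : sD ^ 2 = (β - γ) ^ 2 + 2 * β * θ)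
    (hlt : θ * a < γ - β + sD) (hsgt : γ - β < sD) :
    0 < β * (1 - a) + a * γ - (1 / 2) * a ^ 2 * θ := by
  have f1 : 0 < sD + (γ - β) - θ * a := by linarith
  have f2 : 0 < sD - (γ - β) + θ * a := by nlinarith [mul_nonneg hθ.le ha]
  nlinarith [mul_pos f1 f2, hs2, hθ]

private lemma stmt12_aux_theta (ν β γ θ d : ℝ) (hν : 1 ≤ ν) (hβ0 : 0 < β) (hβ1 : β ≤ 1)
    (hd : γ ^ 2 ≤ d) (hkey : 0 ≤ 1 - 2 * γ + d)
    (hθ' : θ = ν * (1 - 2 * γ + d) + 1 - β / 2 + d / 2 - γ)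
    (hβγ : β < 1 ∨ γ < 1) : 0 < θ := by
  rcases hβγ with hb | hg
  · rw [hθ']
    have hν0 : 0 ≤ ν * (1 - 2 * γ + d) :=
      mul_nonneg (show (0:ℝ) ≤ ν by linarith) hkey
    linarith [hd, sq_nonneg (1 - γ)]
  · rw [hθ']
    have h1 : (1 - γ) ^ 2 ≤ 1 - 2 * γ + d := by linarith [hd, sq_nonneg (1 - γ)]
    have h2' : (1 - γ) ^ 2 ≤ ν * (1 - 2 * γ + d) :=
      h1.trans (le_mul_of_one_le_left hkey hν)
    have hγpos : 0 < (1 - γ) ^ 2 := pow_pos (by linarith) 2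
    linarith [h2', hd, sq_nonneg (1 - γ)]

/-- The main estimate: bound on `Δx ⬝ᵥ Δs`. -/
private lemma stmt12_aux_dot {n : ℕ}
    (ν β γ : ℝ) (hν : 1 ≤ ν) (hβ0 : 0 < β) (hβ1 : β ≤ 1)
    (x s xt st Δx Δs : Fin n → ℝ) (τ κ : ℝ) (hτ : 0 < τ) (hκ : 0 < κ)
    (W : Matrix (Fin n) (Fin n) ℝ) (hWsymm : W.IsSymm) (hWpd : W.PosDef)
    (hWx : W *ᵥ x = s) (hWxt : W *ᵥ xt = st) (hxst : x ⬝ᵥ st = ν)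
    (μe : ℝ) (hμe : μe = (x ⬝ᵥ s + τ * κ) / (ν + 1))
    (hN1 : β * μe ≤ τ * κ) (hN2 : β * μe * (xt ⬝ᵥ st) ≤ ν)
    (hdir1 : W *ᵥ Δx + Δs = -s + (γ * μe) • st)
    (θ : ℝ) (hθ : θ = ν * (1 - 2 * γ + γ ^ 2 / β) + 1 - β / 2 + γ ^ 2 / (2 * β) - γ) :
    Δx ⬝ᵥ Δs ≤ 1 / 2 * μe * θ := by
  have hsym : ∀ a b : Fin n → ℝ, a ⬝ᵥ (W *ᵥ b) = b ⬝ᵥ (W *ᵥ a) := by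
    intro a b
    rw [dotProduct_mulVec, ← mulVec_transpose, hWsymm.eq, dotProduct_comm]
  have hpsd : ∀ v : Fin n → ℝ, 0 ≤ v ⬝ᵥ (W *ᵥ v) := fun v => by
    simpa using hWpd.posSemidef.dotProduct_mulVec_nonneg v
  have hν1 : (0:ℝ) < ν + 1 := by linarith
  have hxs : 0 ≤ x ⬝ᵥ s := hWx ▸ hpsd x
  have hμpos : 0 < μe := by
    rw [hμe]; exact div_pos (by nlinarith [mul_pos hτ hκ]) hν1
  have hxseq : x ⬝ᵥ s = (ν + 1) * μe - τ * κ := by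
    rw [hμe]; field_simp; ring
  have hxts : xt ⬝ᵥ s = ν := by
    rw [← hWx, hsym xt x, hWxt, hxst]
  set z : Fin n → ℝ := (γ * μe) • xt - x with hz
  have hWz : W *ᵥ z = (γ * μe) • st - s := by
    rw [hz, mulVec_sub, mulVec_smul, hWx, hWxt]
  have hΔs : Δs = W *ᵥ (z - Δx) := by
    rw [mulVec_sub, hWz, eq_sub_of_add_eq' hdir1]
    abel
  have hq : Δx ⬝ᵥ Δs ≤ (1/4) * (z ⬝ᵥ (W *ᵥ z)) := by
    have e1 : Δx ⬝ᵥ Δs = Δx ⬝ᵥ (W *ᵥ z) - Δx ⬝ᵥ (W *ᵥ Δx) := by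
      rw [hΔs, mulVec_sub, dotProduct_sub]
    have e2 : (z - (2:ℝ) • Δx) ⬝ᵥ (W *ᵥ (z - (2:ℝ) • Δx)) =
        z ⬝ᵥ (W *ᵥ z) - 2 * (z ⬝ᵥ (W *ᵥ Δx)) - 2 * (Δx ⬝ᵥ (W *ᵥ z))
          + 4 * (Δx ⬝ᵥ (W *ᵥ Δx)) := by
      simp only [mulVec_sub, mulVec_smul, dotProduct_sub, sub_dotProduct,
        dotProduct_smul, smul_dotProduct, smul_eq_mul]
      ring
    have e3 := hsym z Δx
    linarith [hpsd (z - (2:ℝ) • Δx)]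
  have hzWz : z ⬝ᵥ (W *ᵥ z) =
      γ ^ 2 * μe ^ 2 * (xt ⬝ᵥ st) - 2 * (γ * μe) * ν + x ⬝ᵥ s := by
    rw [hWz, hz]
    simp only [dotProduct_sub, sub_dotProduct, dotProduct_smul, smul_dotProduct,
      smul_eq_mul, hxst, hxts]
    ring
  set d : ℝ := γ ^ 2 / β with hdd
  have hβd : γ ^ 2 = β * d := by rw [hdd]; field_simp
  have hA : γ ^ 2 * μe ^ 2 * (xt ⬝ᵥ st) ≤ d * μe * ν := by
    have h := mul_le_mul_of_nonneg_left hN2 (show (0:ℝ) ≤ d * μe by positivity)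
    calc γ ^ 2 * μe ^ 2 * (xt ⬝ᵥ st) = d * μe * (β * μe * (xt ⬝ᵥ st)) := by
          rw [hβd]; ring
      _ ≤ d * μe * ν := h
  have hd : γ ^ 2 ≤ d := by
    rw [hdd, le_div_iff₀ hβ0]; nlinarith [sq_nonneg γ]
  have hkey : 0 ≤ 1 - 2 * γ + d := by nlinarith [sq_nonneg (1 - γ)]
  have h2 : 0 ≤ μe * ((ν + 1) * (1 - 2 * γ + d)) :=
    mul_nonneg hμpos.le (mul_nonneg hν1.le hkey)
  have hθ' : θ = ν * (1 - 2 * γ + d) + 1 - β / 2 + d / 2 - γ := by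
    rw [hθ, hdd]; field_simp
  rw [hθ']
  have hqq := hq
  rw [hzWz, hxseq] at hqq
  linarith [hqq, hA, hN1, h2]

/-- Lower bound on `τ₊ κ₊` after a predictor step, and positivity of `τ₊, κ₊`
for small enough step sizes. -/
theorem stmt12 {n : ℕ}
    (ν β γ : ℝ) (hν : 1 ≤ ν) (hβ0 : 0 < β) (hβ1 : β ≤ 1)
    (x s xt st Δx Δs : Fin n → ℝ) (τ κ Δτ Δκ : ℝ) (hτ : 0 < τ) (hκ : 0 < κ)
    (W : Matrix (Fin n) (Fin n) ℝ) (hWsymm : W.IsSymm) (hWpd : W.PosDef)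
    (hWx : W *ᵥ x = s) (hWxt : W *ᵥ xt = st) (hxst : x ⬝ᵥ st = ν)
    (μe : ℝ) (hμe : μe = (x ⬝ᵥ s + τ * κ) / (ν + 1))
    (hN1 : β * μe ≤ τ * κ) (hN2 : β * μe * (xt ⬝ᵥ st) ≤ ν)
    (hdir1 : W *ᵥ Δx + Δs = -s + (γ * μe) • st)
    (hdir2 : τ * Δκ + κ * Δτ = -(τ * κ) + γ * μe)
    (hdir3 : Δx ⬝ᵥ Δs + Δτ * Δκ = 0)
    (θ : ℝ) (hθ : θ = ν * (1 - 2 * γ + γ ^ 2 / β) + 1 - β / 2 + γ ^ 2 / (2 * β) - γ)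
    (α : ℝ) (hα0 : 0 ≤ α) (hα1 : α ≤ 1) :
    μe * (β * (1 - α) + α * γ - (1 / 2) * α ^ 2 * θ) ≤ (τ + α * Δτ) * (κ + α * Δκ) ∧
    ((β < 1 ∨ γ < 1) →
      α < (γ - β + Real.sqrt ((β - γ) ^ 2 + 2 * β * θ)) / θ →
      0 < τ + α * Δτ ∧ 0 < κ + α * Δκ) := by
  have hfinal : Δx ⬝ᵥ Δs ≤ 1 / 2 * μe * θ :=
    stmt12_aux_dot ν β γ hν hβ0 hβ1 x s xt st Δx Δs τ κ hτ hκ W hWsymm hWpd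
      hWx hWxt hxst μe hμe hN1 hN2 hdir1 θ hθ
  have hν1 : (0:ℝ) < ν + 1 := by linarith
  have hxs : 0 ≤ x ⬝ᵥ s := by
    rw [← hWx]; simpa using hWpd.posSemidef.dotProduct_mulVec_nonneg x
  have hμpos : 0 < μe := by
    rw [hμe]; exact div_pos (by nlinarith [mul_pos hτ hκ]) hν1
  have hd : γ ^ 2 ≤ γ ^ 2 / β := by
    rw [le_div_iff₀ hβ0]; nlinarith [sq_nonneg γ]
  have hkey : 0 ≤ 1 - 2 * γ + γ ^ 2 / β := by linarith [sq_nonneg (1 - γ)]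
  have hθ' : θ = ν * (1 - 2 * γ + γ ^ 2 / β) + 1 - β / 2 + γ ^ 2 / β / 2 - γ := by
    rw [hθ]; ring
  have hpart1 : ∀ a : ℝ, 0 ≤ a → a ≤ 1 →
      μe * (β * (1 - a) + a * γ - (1 / 2) * a ^ 2 * θ) ≤ (τ + a * Δτ) * (κ + a * Δκ) := by
    intro a ha0 ha1
    have hprod : (τ + a * Δτ) * (κ + a * Δκ)
        = (1 - a) * (τ * κ) + a * (γ * μe) - a ^ 2 * (Δx ⬝ᵥ Δs) := by
      linear_combination a * hdir2 + a ^ 2 * hdir3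
    have h1 : 0 ≤ (1 - a) * (τ * κ - β * μe) :=
      mul_nonneg (by linarith) (by linarith)
    have h2' : 0 ≤ a ^ 2 * (1/2 * μe * θ - Δx ⬝ᵥ Δs) :=
      mul_nonneg (sq_nonneg a) (by linarith)
    linarith [h1, h2', hprod.le, hprod.ge]
  refine ⟨hpart1 α hα0 hα1, fun hβγ hαlt => ?_⟩
  have hθpos : 0 < θ := stmt12_aux_theta ν β γ θ (γ ^ 2 / β) hν hβ0 hβ1 hd hkey hθ' hβγ
  set D : ℝ := (β - γ) ^ 2 + 2 * β * θ with hD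
  have hDpos : 0 < D := by positivity
  set sD : ℝ := Real.sqrt D with hsD
  have hs2 : sD ^ 2 = D := Real.sq_sqrt hDpos.le
  have hαlt' : θ * α < γ - β + sD := by
    have := (lt_div_iff₀ hθpos).1 hαlt
    linarith
  have hsgt : γ - β < sD := stmt12_aux_sqrt β γ θ hβ0 hθpos
  have hqpos : ∀ a : ℝ, 0 ≤ a → a ≤ α →
      0 < β * (1 - a) + a * γ - (1 / 2) * a ^ 2 * θ := by
    intro a ha0 haα
    have hθa : θ * a < γ - β + sD := by
      have := mul_le_mul_of_nonneg_left haα hθpos.le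
      linarith
    exact stmt12_aux_q β γ θ a sD hθpos ha0 hs2 hθa hsgt
  constructor
  · by_contra hcon
    push_neg at hcon
    have hΔτneg : Δτ < 0 := by
      rcases lt_or_ge Δτ 0 with h | h
      · exact h
      · have := mul_nonneg hα0 h; linarith
    set a : ℝ := τ / (-Δτ) with ha
    have ha0 : 0 < a := div_pos hτ (by linarith)
    have haα : a ≤ α := by
      rw [ha, div_le_iff₀ (by linarith : (0:ℝ) < -Δτ)]
      linarith
    have hzero : τ + a * Δτ = 0 := by
      rw [ha]
      field_simp [hΔτneg.ne]
      ring
    have hb := hpart1 a ha0.le (haα.trans hα1)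
    rw [hzero, zero_mul] at hb
    have := mul_pos hμpos (hqpos a ha0.le haα)
    linarith
  · by_contra hcon
    push_neg at hcon
    have hΔκneg : Δκ < 0 := by
      rcases lt_or_ge Δκ 0 with h | h
      · exact h
      · have := mul_nonneg hα0 h; linarith
    set a : ℝ := κ / (-Δκ) with ha
    have ha0 : 0 < a := div_pos hκ (by linarith)
    have haα : a ≤ α := by
      rw [ha, div_le_iff₀ (by linarith : (0:ℝ) < -Δκ)]
      linarith
    have hzero : κ + a * Δκ = 0 := by
      rw [ha]
      field_simp [hΔκneg.ne]
      ring
    have hb := hpart1 a ha0.le (haα.trans hα1)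
    rw [hzero, mul_zero] at hb
    have := mul_pos hμpos (hqpos a ha0.le haα)
    linarith
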